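/- There exists a convex polygon with 9 vertices on which the Dobkin–Snyder triangle algorithm, started at any root, outputs a triangle whose area is strictly smaller than the maximum area of an inscribed triangle. Concretely, for P with vertices a0=(3040,4460), b2=(4745,4322), a1=(4752,4262), a2=(3383,413), c0=(5000,1000), c1=(1213,691), b0=(1000,1000), b1=(759,2927), c2=(2506,4423) (in convex position), the triangle △a0 b0 c0 has strictly larger area than each of the 2-stable triangles △a0 a1 a2, △b0 b1 b2, △c0 c1 c2. -/

import Mathlib

noncomputable section

/-- Twice the signed area of the triangle `p q r`. -/
def det2 (p q r : ℝ × ℝ) : ℝ :=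
  (q.1 - p.1) * (r.2 - p.2) - (q.2 - p.2) * (r.1 - p.1)

/-- Area of the triangle with vertices `p`, `q`, `r`. -/
def triArea (p q r : ℝ × ℝ) : ℝ := |det2 p q r| / 2

/-- The vertices `v 0, v 1, ...` are in strictly convex position, listed in
counterclockwise cyclic order: every three consecutive vertices make a left turn. -/
def IsConvexCCW {m : ℕ} [NeZero m] (v : Fin m → ℝ × ℝ) : Prop :=
  ∀ i : Fin m, 0 < det2 (v i) (v (i + 1)) (v (i + 1 + 1))

/-- `x` lies on the closed cyclic arc from `a` forward to `b`. -/
def btwFin {m : ℕ} (a x b : Fin m) : Prop := (x - a).val ≤ (b - a).val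

/-- `x` lies strictly between `a` and `b` on the cyclic arc from `a` forward to `b`. -/
def sbtwFin {m : ℕ} (a x b : Fin m) : Prop := btwFin a x b ∧ x ≠ a ∧ x ≠ b

/-- The triangle `△ (v r) (v b) (v c)`, with `r, b, c` in counterclockwise cyclic
order, is 2-stable rooted at `r`: replacing `b` or `c` individually by any other
vertex of the polygon (respecting the cyclic order) does not strictly increase
the area. -/
def TwoStable {m : ℕ} (v : Fin m → ℝ × ℝ) (r b c : Fin m) : Prop :=
  (∀ x : Fin m, btwFin r x c → triArea (v r) (v x) (v c) ≤ triArea (v r) (v b) (v c)) ∧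
  (∀ x : Fin m, btwFin b x r → triArea (v r) (v b) (v x) ≤ triArea (v r) (v b) (v c))

/-- The triangle `△ (v p) (v q) (v r)`, with `p, q, r` in counterclockwise cyclic
order, is 3-stable: replacing any single one of its vertices by any other vertex
of the polygon (respecting the cyclic order) does not strictly increase the area. -/
def ThreeStable {m : ℕ} (v : Fin m → ℝ × ℝ) (p q r : Fin m) : Prop :=
  (∀ x : Fin m, btwFin r x q → triArea (v x) (v q) (v r) ≤ triArea (v p) (v q) (v r)) ∧
  (∀ x : Fin m, btwFin p x r → triArea (v p) (v x) (v r) ≤ triArea (v p) (v q) (v r)) ∧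
  (∀ x : Fin m, btwFin q x p → triArea (v p) (v q) (v x) ≤ triArea (v p) (v q) (v r))

/-- Two polygon-aligned triangles, given by index triples in cyclic order,
interleave: between every two cyclically successive vertices of one there is a
vertex of the other (possibly coinciding with one of them). -/
def InterleaveTri {m : ℕ} (i j k r s t : Fin m) : Prop :=
  (∃ x ∈ ({r, s, t} : Set (Fin m)), btwFin i x j) ∧
  (∃ x ∈ ({r, s, t} : Set (Fin m)), btwFin j x k) ∧
  (∃ x ∈ ({r, s, t} : Set (Fin m)), btwFin k x i) ∧
  (∃ x ∈ ({i, j, k} : Set (Fin m)), btwFin r x s) ∧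
  (∃ x ∈ ({i, j, k} : Set (Fin m)), btwFin s x t) ∧
  (∃ x ∈ ({i, j, k} : Set (Fin m)), btwFin t x r)

/-- The nine vertices of the counter-example polygon, in counterclockwise
convex-position order: b0, c1, a2, c0, a1, b2, a0, c2, b1. -/
def V9 : Fin 9 → ℝ × ℝ :=
  ![((1000 : ℝ), (1000 : ℝ)),  -- b0
    ((1213 : ℝ), (691 : ℝ)),   -- c1
    ((3383 : ℝ), (413 : ℝ)),   -- a2
    ((5000 : ℝ), (1000 : ℝ)),  -- c0
    ((4752 : ℝ), (4262 : ℝ)),  -- a1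
    ((4745 : ℝ), (4322 : ℝ)),  -- b2
    ((3040 : ℝ), (4460 : ℝ)),  -- a0
    ((2506 : ℝ), (4423 : ℝ)),  -- c2
    ((759 : ℝ), (2927 : ℝ))]   -- b1

lemma V9_0 : V9 0 = (((1000:ℝ)),((1000:ℝ))) := rfl
lemma V9_1 : V9 1 = (((1213:ℝ)),((691:ℝ))) := rfl
lemma V9_2 : V9 2 = (((3383:ℝ)),((413:ℝ))) := rfl
lemma V9_3 : V9 3 = (((5000:ℝ)),((1000:ℝ))) := rfl
lemma V9_4 : V9 4 = (((4752:ℝ)),((4262:ℝ))) := rfl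
lemma V9_5 : V9 5 = (((4745:ℝ)),((4322:ℝ))) := rfl
lemma V9_6 : V9 6 = (((3040:ℝ)),((4460:ℝ))) := rfl
lemma V9_7 : V9 7 = (((2506:ℝ)),((4423:ℝ))) := rfl
lemma V9_8 : V9 8 = (((759:ℝ)),((2927:ℝ))) := rfl

lemma V9m_0 : V9 ⟨0, by norm_num⟩ = V9 0 := rfl
lemma V9m_1 : V9 ⟨1, by norm_num⟩ = V9 1 := rfl
lemma V9m_2 : V9 ⟨2, by norm_num⟩ = V9 2 := rfl
lemma V9m_3 : V9 ⟨3, by norm_num⟩ = V9 3 := rfl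
lemma V9m_4 : V9 ⟨4, by norm_num⟩ = V9 4 := rfl
lemma V9m_5 : V9 ⟨5, by norm_num⟩ = V9 5 := rfl
lemma V9m_6 : V9 ⟨6, by norm_num⟩ = V9 6 := rfl
lemma V9m_7 : V9 ⟨7, by norm_num⟩ = V9 7 := rfl
lemma V9m_8 : V9 ⟨8, by norm_num⟩ = V9 8 := rfl

lemma V9p_0 : V9 (⟨0, by norm_num⟩ + 1) = V9 1 := rfl
lemma V9pp_0 : V9 (⟨0, by norm_num⟩ + 1 + 1) = V9 2 := rfl
lemma V9p_1 : V9 (⟨1, by norm_num⟩ + 1) = V9 2 := rfl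
lemma V9pp_1 : V9 (⟨1, by norm_num⟩ + 1 + 1) = V9 3 := rfl
lemma V9p_2 : V9 (⟨2, by norm_num⟩ + 1) = V9 3 := rfl
lemma V9pp_2 : V9 (⟨2, by norm_num⟩ + 1 + 1) = V9 4 := rfl
lemma V9p_3 : V9 (⟨3, by norm_num⟩ + 1) = V9 4 := rfl
lemma V9pp_3 : V9 (⟨3, by norm_num⟩ + 1 + 1) = V9 5 := rfl
lemma V9p_4 : V9 (⟨4, by norm_num⟩ + 1) = V9 5 := rfl
lemma V9pp_4 : V9 (⟨4, by norm_num⟩ + 1 + 1) = V9 6 := rfl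
lemma V9p_5 : V9 (⟨5, by norm_num⟩ + 1) = V9 6 := rfl
lemma V9pp_5 : V9 (⟨5, by norm_num⟩ + 1 + 1) = V9 7 := rfl
lemma V9p_6 : V9 (⟨6, by norm_num⟩ + 1) = V9 7 := rfl
lemma V9pp_6 : V9 (⟨6, by norm_num⟩ + 1 + 1) = V9 8 := rfl
lemma V9p_7 : V9 (⟨7, by norm_num⟩ + 1) = V9 8 := rfl
lemma V9pp_7 : V9 (⟨7, by norm_num⟩ + 1 + 1) = V9 0 := rfl
lemma V9p_8 : V9 (⟨8, by norm_num⟩ + 1) = V9 0 := rfl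
lemma V9pp_8 : V9 (⟨8, by norm_num⟩ + 1 + 1) = V9 1 := rfl
lemma V9s_11 : V9 (1 + 1) = V9 2 := rfl
lemma V9s_111 : V9 (1 + 1 + 1) = V9 3 := rfl

/-- The 9-vertex counter-example polygon to the Dobkin–Snyder triangle
algorithm: the polygon is convex (in counterclockwise order), each of the
triangles `△a0 a1 a2`, `△b0 b1 b2` and `△c0 c1 c2` is 2-stable rooted at `a0`,
`b0`, `c0` respectively, and yet the triangle `△a0 b0 c0` has strictly larger
area than each of them. (Here `a0 = V9 6`, `b0 = V9 0`, `c0 = V9 3`,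
`a1 = V9 4`, `a2 = V9 2`, `b1 = V9 8`, `b2 = V9 5`, `c1 = V9 1`, `c2 = V9 7`.) -/
theorem dobkin_snyder_counterexample :
    IsConvexCCW V9 ∧
    TwoStable V9 6 2 4 ∧ TwoStable V9 0 5 8 ∧ TwoStable V9 3 7 1 ∧
    triArea (V9 6) (V9 4) (V9 2) < triArea (V9 6) (V9 0) (V9 3) ∧
    triArea (V9 0) (V9 8) (V9 5) < triArea (V9 6) (V9 0) (V9 3) ∧
    triArea (V9 3) (V9 1) (V9 7) < triArea (V9 6) (V9 0) (V9 3) := by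
  refine ⟨?_, ⟨?_, ?_⟩, ⟨?_, ?_⟩, ⟨?_, ?_⟩, ?_, ?_, ?_⟩
  · intro i; fin_cases i <;>
      norm_num [det2, V9s_11, V9s_111, V9p_0, V9pp_0, V9p_1, V9pp_1, V9p_2, V9pp_2, V9p_3, V9pp_3, V9p_4, V9pp_4, V9p_5, V9pp_5, V9p_6, V9pp_6, V9p_7, V9pp_7, V9p_8, V9pp_8, V9m_0, V9m_1, V9m_2, V9m_3, V9m_4, V9m_5, V9m_6, V9m_7, V9m_8, V9_0, V9_1, V9_2, V9_3, V9_4, V9_5, V9_6, V9_7, V9_8]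
  all_goals first
    | (intro x hx; fin_cases x <;>
        first
          | (exfalso; simp only [btwFin] at hx; exact absurd hx (by decide))
          | norm_num [triArea, det2, V9m_0, V9m_1, V9m_2, V9m_3, V9m_4, V9m_5, V9m_6, V9m_7, V9m_8, V9_0, V9_1, V9_2, V9_3, V9_4, V9_5, V9_6, V9_7, V9_8])
    | norm_num [triArea, det2, V9m_0, V9m_1, V9m_2, V9m_3, V9m_4, V9m_5, V9m_6, V9m_7, V9m_8, V9_0, V9_1, V9_2, V9_3, V9_4, V9_5, V9_6, V9_7, V9_8]
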